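/- Let H be a complex Hilbert space, 𝔎 a unitary with 𝔎³ = Id, and 𝔄 an antiunitary operator (conjugate-linear isometric bijection) with 𝔄² = Id and 𝔄𝔎 = 𝔎𝔄 on the level of commutation with eigenspaces such that 𝔄 maps the τ-eigenspace H_τ of 𝔎 bijectively onto the τ̄-eigenspace H_τ̄. Suppose E ⊆ H is a 2-dimensional subspace invariant under both 𝔎 and 𝔄, with E ⊆ H_τ ⊕ H_τ̄. Then there exists Ψ₁ ∈ H_τ with ‖Ψ₁‖ = 1 such that, setting Ψ₂ = 𝔄Ψ₁ ∈ H_τ̄, one has E = span{Ψ₁, Ψ₂} and Ψ₁ ⊥ Ψ₂. -/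

import Mathlib

/-- `τ = e^{2πi/3}`. -/
noncomputable def τ : ℂ := Complex.exp (2 * Real.pi * Complex.I / 3)

lemma tau_ne_zero : τ ≠ 0 := Complex.exp_ne_zero _

lemma tau_cube : τ ^ 3 = 1 := by
  rw [τ, ← Complex.exp_nat_mul]
  rw [show (3:ℕ) * (2 * Real.pi * Complex.I / 3) = 2 * Real.pi * Complex.I by push_cast; ring]
  exact Complex.exp_two_pi_mul_I

lemma tau_ne_one : τ ≠ 1 := by
  intro h
  rw [τ, Complex.exp_eq_one_iff] at h
  obtain ⟨n, hn⟩ := h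
  have hπ : (Real.pi : ℂ) ≠ 0 := by exact_mod_cast Real.pi_ne_zero
  have h2 : (2 : ℂ) * Real.pi * Complex.I ≠ 0 := by
    simp [hπ, Complex.I_ne_zero]
  have hz : (2 : ℂ) * Real.pi * Complex.I * ((1:ℂ)/3 - n) = 0 := by
    linear_combination hn
  rcases mul_eq_zero.mp hz with h | h
  · exact h2 h
  · have h3 : ((3 * n : ℤ) : ℂ) = 1 := by push_cast; linear_combination (-3:ℂ) * h
    have : (3 * n : ℤ) = 1 := by exact_mod_cast h3
    omega

lemma tau_conj : (starRingEnd ℂ) τ = τ ^ 2 := by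
  rw [τ, ← Complex.exp_conj, ← Complex.exp_nat_mul]
  rw [show (starRingEnd ℂ) (2 * Real.pi * Complex.I / 3)
      = (2:ℕ) * (2 * Real.pi * Complex.I / 3) - 2 * Real.pi * Complex.I by
    rw [map_div₀, map_mul, map_mul, Complex.conj_I, Complex.conj_ofReal, map_ofNat, map_ofNat]
    push_cast
    ring]
  rw [Complex.exp_sub, Complex.exp_two_pi_mul_I]
  ring

lemma tau_sum : 1 + τ + τ ^ 2 = 0 := by
  have h : (τ - 1) * (1 + τ + τ ^ 2) = 0 := by linear_combination tau_cube
  rcases mul_eq_zero.mp h with h | h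
  · exact absurd (sub_eq_zero.mp h) tau_ne_one
  · exact h

/-- If a 2-dimensional subspace `E ⊆ H_τ ⊕ H_τ̄` is invariant under a cube-root-of-identity
unitary `𝔎` and an antiunitary involution `𝔄` exchanging `H_τ` and `H_τ̄`, then there is a
unit vector `Ψ₁ ∈ H_τ` with `Ψ₂ = 𝔄Ψ₁ ∈ H_τ̄`, `E = span{Ψ₁, Ψ₂}` and `Ψ₁ ⊥ Ψ₂`. -/
theorem degenerate_eigenspace_basis
    {H : Type*} [NormedAddCommGroup H] [InnerProductSpace ℂ H]
    (U : H →ₗᵢ[ℂ] H) (hU3 : ∀ x, U (U (U x)) = x)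
    (A : H → H)
    (hAadd : ∀ x y, A (x + y) = A x + A y)
    (hAsmul : ∀ (c : ℂ) (x : H), A (c • x) = (starRingEnd ℂ) c • A x)
    (hAinner : ∀ x y : H, (inner ℂ (A x) (A y) : ℂ) = (starRingEnd ℂ) (inner ℂ x y))
    (hA2 : ∀ x, A (A x) = x)
    (hAτ : ∀ x, U x = τ • x → U (A x) = (starRingEnd ℂ) τ • A x)
    (hAτ' : ∀ x, U x = (starRingEnd ℂ) τ • x → U (A x) = τ • A x)
    (E : Submodule ℂ H) (hdim : Module.finrank ℂ E = 2)
    (hEU : ∀ x ∈ E, U x ∈ E) (hEA : ∀ x ∈ E, A x ∈ E)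
    (hEsub : ∀ x ∈ E, ∃ y z : H,
      U y = τ • y ∧ U z = (starRingEnd ℂ) τ • z ∧ x = y + z) :
    ∃ Ψ₁ : H, U Ψ₁ = τ • Ψ₁ ∧ ‖Ψ₁‖ = 1 ∧
      U (A Ψ₁) = (starRingEnd ℂ) τ • A Ψ₁ ∧
      E = Submodule.span ℂ {Ψ₁, A Ψ₁} ∧ (inner ℂ Ψ₁ (A Ψ₁) : ℂ) = 0 := by
  have hτ3 := tau_cube
  have hτ1 := tau_ne_one
  have hτ0 := tau_ne_zero
  have hc := tau_conj
  have hsum := tau_sum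
  -- the projection onto the τ-eigenspace
  set P : H → H := fun x => (3:ℂ)⁻¹ • (x + τ ^ 2 • U x + τ • U (U x)) with hPdef
  have hUP : ∀ x, U (P x) = τ • P x := by
    intro x
    simp only [hPdef, map_smul, map_add, hU3 x]
    match_scalars
    · linear_combination (-1/3 : ℂ) * hτ3
    · ring
    · ring
  have hPeig : ∀ y, U y = τ • y → P y = y := by
    intro y hy
    simp only [hPdef, hy, map_smul, smul_smul]
    match_scalars
    linear_combination (2/3 : ℂ) * hτ3
  have hPz : ∀ z, U z = τ ^ 2 • z → P z = 0 := by
    intro z hz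
    simp only [hPdef, hz, map_smul, smul_smul]
    match_scalars
    linear_combination (1/3 : ℂ) * hsum + ((τ + τ^2)/3 : ℂ) * hτ3
  have hPadd : ∀ x y, P (x + y) = P x + P y := by
    intro x y
    simp only [hPdef, map_add, smul_add]
    module
  have hPmem : ∀ x ∈ E, P x ∈ E := by
    intro x hx
    exact Submodule.smul_mem _ _ (add_mem (add_mem hx
      (Submodule.smul_mem _ _ (hEU x hx)))
      (Submodule.smul_mem _ _ (hEU _ (hEU x hx))))
  have hA0 : A 0 = 0 := by
    have h := hAadd 0 0
    rw [add_zero] at h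
    exact (add_eq_left.mp h.symm)
  -- there is x ∈ E with P x ≠ 0
  have hex : ∃ x ∈ E, P x ≠ 0 := by
    by_contra hcon
    push_neg at hcon
    have hE2 : ∀ x ∈ E, U x = τ ^ 2 • x := by
      intro x hx
      obtain ⟨y, z, hy, hz, rfl⟩ := hEsub x hx
      rw [hc] at hz
      have hPyz : P (y + z) = y := by
        rw [hPadd, hPeig y hy, hPz z hz, add_zero]
      have hy0 : y = 0 := by rw [← hPyz]; exact hcon _ hx
      rw [hy0, zero_add] at *
      exact hz
    have hEbot : E ≠ ⊥ := by
      intro hb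
      rw [hb] at hdim
      simp at hdim
    obtain ⟨x₀, hx₀E, hx₀⟩ := Submodule.exists_mem_ne_zero_of_ne_bot hEbot
    have h1 := hAτ' x₀ (by rw [hc]; exact hE2 x₀ hx₀E)
    have h2 := hE2 (A x₀) (hEA x₀ hx₀E)
    have hAx0 : A x₀ ≠ 0 := by
      intro h
      apply hx₀
      rw [← hA2 x₀, h, hA0]
    have h3 : (τ - τ ^ 2) • A x₀ = 0 := by
      rw [sub_smul, ← h1, ← h2, sub_self]
    have hne : τ - τ ^ 2 ≠ 0 := by
      intro h
      have : τ * 1 = τ * τ := by linear_combination h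
      exact hτ1 (mul_left_cancel₀ hτ0 this).symm
    rcases smul_eq_zero.mp h3 with h | h
    · exact hne h
    · exact hAx0 h
  -- construct Ψ₁
  obtain ⟨x, hxE, hPx⟩ := hex
  set v : H := P x with hv
  have hvE : v ∈ E := hPmem x hxE
  have hUv : U v = τ • v := hUP x
  have hvnorm : ‖v‖ ≠ 0 := norm_ne_zero_iff.mpr hPx
  set Ψ₁ : H := ((‖v‖ : ℂ))⁻¹ • v with hΨ
  have hΨE : Ψ₁ ∈ E := Submodule.smul_mem _ _ hvE
  have hUΨ : U Ψ₁ = τ • Ψ₁ := by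
    rw [hΨ, map_smul, hUv, smul_comm]
  have hΨnorm : ‖Ψ₁‖ = 1 := by
    rw [hΨ, norm_smul, norm_inv, Complex.norm_real, Real.norm_eq_abs,
      abs_of_nonneg (norm_nonneg v), inv_mul_cancel₀ hvnorm]
  have hUΨ₂ : U (A Ψ₁) = (starRingEnd ℂ) τ • A Ψ₁ := hAτ Ψ₁ hUΨ
  have hΨ₂E : A Ψ₁ ∈ E := hEA Ψ₁ hΨE
  -- orthogonality
  have horth : (inner ℂ Ψ₁ (A Ψ₁) : ℂ) = 0 := by
    have h := U.inner_map_map Ψ₁ (A Ψ₁)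
    rw [hUΨ, hUΨ₂, inner_smul_left, inner_smul_right, hc] at h
    have h' : (τ ^ 2 * τ ^ 2 - 1) * (inner ℂ Ψ₁ (A Ψ₁) : ℂ) = 0 := by
      linear_combination h
    rcases mul_eq_zero.mp h' with h'' | h''
    · exact absurd (by linear_combination h'' - τ * hτ3 : τ = 1) hτ1
    · exact h''
  -- norm of A Ψ₁
  have hinner₂ : (inner ℂ (A Ψ₁) (A Ψ₁) : ℂ) = 1 := by
    rw [hAinner, inner_self_eq_norm_sq_to_K, hΨnorm]
    simp
  have hΨ₂norm : ‖A Ψ₁‖ = 1 := by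
    have h := inner_self_eq_norm_sq_to_K (𝕜 := ℂ) (A Ψ₁)
    rw [hinner₂] at h
    have h' : ‖A Ψ₁‖ ^ 2 = 1 := Complex.ofReal_injective (by simpa using h.symm)
    nlinarith [norm_nonneg (A Ψ₁)]
  -- orthonormality and span
  have horth' : (inner ℂ (A Ψ₁) Ψ₁ : ℂ) = 0 := by
    rw [← inner_conj_symm, horth, map_zero]
  have hON : Orthonormal ℂ ![Ψ₁, A Ψ₁] := by
    constructor
    · intro i
      fin_cases i
      · simpa using hΨnorm
      · simpa using hΨ₂norm
    · intro i j hij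
      fin_cases i <;> fin_cases j
      · exact absurd rfl hij
      · simpa using horth
      · simpa using horth'
      · exact absurd rfl hij
  have hLI := hON.linearIndependent
  have hrange : Set.range ![Ψ₁, A Ψ₁] = {Ψ₁, A Ψ₁} := by
    simp [Matrix.range_cons, Matrix.range_empty, Set.pair_comm]
  have hspanrank : Module.finrank ℂ (Submodule.span ℂ ({Ψ₁, A Ψ₁} : Set H)) = 2 := by
    rw [← hrange, finrank_span_eq_card hLI]
    simp
  have hle : Submodule.span ℂ ({Ψ₁, A Ψ₁} : Set H) ≤ E := by
    rw [Submodule.span_le]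
    intro y hy
    simp only [Set.mem_insert_iff, Set.mem_singleton_iff] at hy
    rcases hy with rfl | rfl
    · exact hΨE
    · exact hΨ₂E
  haveI : FiniteDimensional ℂ E := FiniteDimensional.of_finrank_eq_succ hdim
  have hEq : Submodule.span ℂ ({Ψ₁, A Ψ₁} : Set H) = E :=
    Submodule.eq_of_le_of_finrank_eq hle (by rw [hspanrank, hdim])
  exact ⟨Ψ₁, hUΨ, hΨnorm, hUΨ₂, hEq.symm, horth⟩
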